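/- Let Ω ⊆ ℝⁿ and let K : (0,∞) × Ω × Ω → ℂ be measurable such that for some constants C₀, α > 0 and μ ∈ (0,1], for all t > 0 and all x, y, y' ∈ Ω: |K_t(x,y)| ≤ C₀ t^{-n/2} e^{-α|x−y|²/t} and |K_t(x,y) − K_t(x,y')| ≤ C₀ t^{-n/2} (|y−y'|/√t)^μ. Define the subordinated kernel p_t(x,y) = π^{-1/2} ∫₀^∞ K_{t²/(4u)}(x,y) e^{-u} u^{-1/2} du. Then there exist C > 0 and ν ∈ (0,1) such that for all t > 0 and all x, y, y' ∈ Ω: |p_t(x,y)| ≤ C t / (t + |x−y|)^{n+1} and |p_t(x,y) − p_t(x,y')| ≤ C t^{-n} (|y−y'|/t)^ν. -/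

import Mathlib

open Set Function MeasureTheory Filter Topology Bornology
open scoped ENNReal NNReal BigOperators

noncomputable section

/-- ℝⁿ with its Euclidean structure. -/
abbrev Euc (n : ℕ) : Type := EuclideanSpace ℝ (Fin n)

/-- A closed axis-parallel cube in ℝⁿ, given by its center and its half side length. -/
structure Cube (n : ℕ) : Type where
  center : Euc n
  half : ℝ
  half_pos : 0 < half

namespace Cube

variable {n : ℕ}

/-- The dilated cube `ρQ`, as a subset of ℝⁿ. -/
def dset (Q : Cube n) (ρ : ℝ) : Set (Euc n) :=
  {x | ∀ i, |x i - Q.center i| ≤ ρ * Q.half}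

/-- The cube itself, as a subset of ℝⁿ. -/
def toSet (Q : Cube n) : Set (Euc n) := Q.dset 1

/-- The side length `ℓ(Q)`. -/
def side (Q : Cube n) : ℝ := 2 * Q.half

end Cube

/-- The graph of a function `φ : ℝᵐ → ℝ`, as a subset of `ℝ^(m+1)`. -/
def lipGraph {m : ℕ} (φ : Euc m → ℝ) : Set (Euc (m + 1)) :=
  {x | x (Fin.last m) = φ (WithLp.toLp 2 (fun i : Fin m => x i.castSucc))}

/-- A part (i.e. a subset) of a rotated graph of a Lipschitz function. -/
def IsLipschitzGraphPart {n : ℕ} (S : Set (Euc n)) : Prop :=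
  ∃ (m : ℕ) (e : Euc (m + 1) ≃ₗᵢ[ℝ] Euc n) (φ : Euc m → ℝ) (K : NNReal),
    LipschitzWith K φ ∧ S ⊆ e '' lipGraph φ

/-- A strongly Lipschitz domain of ℝⁿ: a proper open connected set whose boundary is a
finite union of parts of rotated graphs of Lipschitz functions, at most one of these
parts being infinite (= unbounded). -/
def IsStronglyLipschitzDomain {n : ℕ} (Ω : Set (Euc n)) : Prop :=
  IsOpen Ω ∧ IsConnected Ω ∧ Ω ≠ univ ∧
  ∃ (N : ℕ) (S : Fin N → Set (Euc n)),
    (∀ i, IsLipschitzGraphPart (S i)) ∧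
    frontier Ω = ⋃ i, S i ∧
    ∀ i j, ¬ IsBounded (S i) → ¬ IsBounded (S j) → i = j

/-- The mean value of `φ` over `s`. -/
def setAvg {n : ℕ} (s : Set (Euc n)) (φ : Euc n → ℝ) : ℝ :=
  (volume s).toReal⁻¹ * ∫ x in s, φ x

/-- The mean square oscillation `|s|⁻¹ ∫_s |φ - φ_s|²`. -/
def oscSq {n : ℕ} (s : Set (Euc n)) (φ : Euc n → ℝ) : ℝ≥0∞ :=
  (volume s)⁻¹ * ∫⁻ x in s, (‖φ x - setAvg s φ‖₊ : ℝ≥0∞) ^ 2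

/-- The mean square `|s|⁻¹ ∫_s |φ|²`. -/
def meanSq {n : ℕ} (s : Set (Euc n)) (φ : Euc n → ℝ) : ℝ≥0∞ :=
  (volume s)⁻¹ * ∫⁻ x in s, (‖φ x‖₊ : ℝ≥0∞) ^ 2

/-- A type (a) cube with respect to `Ω`: `4Q ⊆ Ω`. -/
def IsTypeACube {n : ℕ} (Ω : Set (Euc n)) (Q : Cube n) : Prop := Q.dset 4 ⊆ Ω

/-- A type (b) cube with respect to `Ω`: `2Q ⊆ Ω` and `4Q ∩ ∂Ω ≠ ∅`. -/
def IsTypeBCube {n : ℕ} (Ω : Set (Euc n)) (Q : Cube n) : Prop :=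
  Q.dset 2 ⊆ Ω ∧ (Q.dset 4 ∩ frontier Ω).Nonempty

/-- `a` is supported in `Q` and satisfies the normalization `‖a‖₂ ≤ |Q|^(-1/2)`. -/
def IsAtomOn {n : ℕ} (Q : Cube n) (a : Euc n → ℝ) : Prop :=
  support a ⊆ Q.toSet ∧ MemLp a 2 volume ∧
    eLpNorm a 2 volume ≤ (volume Q.toSet) ^ (-(1 : ℝ) / 2)

/-- A type (a) atom: supported in a type (a) cube, `L²`-normalized, with mean value zero. -/
def IsTypeAAtom {n : ℕ} (Ω : Set (Euc n)) (a : Euc n → ℝ) : Prop :=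
  ∃ Q : Cube n, IsTypeACube Ω Q ∧ IsAtomOn Q a ∧ ∫ x, a x = 0

/-- A type (b) atom: supported in a type (b) cube, `L²`-normalized (no mean value condition). -/
def IsTypeBAtom {n : ℕ} (Ω : Set (Euc n)) (a : Euc n → ℝ) : Prop :=
  ∃ Q : Cube n, IsTypeBCube Ω Q ∧ IsAtomOn Q a

/-- An `H¹(ℝⁿ)`-atom. -/
def IsH1Atom {n : ℕ} (a : Euc n → ℝ) : Prop :=
  ∃ Q : Cube n, IsAtomOn Q a ∧ ∫ x, a x = 0

/-- An `H¹_CW(Ω)`-atom: supported in `Q ∩ cl Ω` for a cube centered in `Ω`, with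
`‖a‖₂ ≤ |Q ∩ Ω|^(-1/2)` and mean value zero. -/
def IsCWAtom {n : ℕ} (Ω : Set (Euc n)) (a : Euc n → ℝ) : Prop :=
  ∃ Q : Cube n, Q.center ∈ Ω ∧ support a ⊆ Q.toSet ∩ closure Ω ∧
    MemLp a 2 volume ∧ eLpNorm a 2 volume ≤ (volume (Q.toSet ∩ Ω)) ^ (-(1 : ℝ) / 2) ∧
    ∫ x, a x = 0

/-- A type (a) local cube: `ℓ(Q) < 1` and `4Q ⊆ Ω`. -/
def IsLocalACube {n : ℕ} (Ω : Set (Euc n)) (Q : Cube n) : Prop :=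
  Q.side < 1 ∧ Q.dset 4 ⊆ Ω

/-- A type (b_far) local cube: `ℓ(Q) ≥ 1` and `4Q ⊆ Ω`. -/
def IsLocalBFarCube {n : ℕ} (Ω : Set (Euc n)) (Q : Cube n) : Prop :=
  1 ≤ Q.side ∧ Q.dset 4 ⊆ Ω

/-- A type (b) local cube: type (b_far) or type (b_close). -/
def IsLocalBCube {n : ℕ} (Ω : Set (Euc n)) (Q : Cube n) : Prop :=
  IsLocalBFarCube Ω Q ∨ IsTypeBCube Ω Q

/-- A type (a) local atom. -/
def IsLocalAAtom {n : ℕ} (Ω : Set (Euc n)) (a : Euc n → ℝ) : Prop :=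
  ∃ Q : Cube n, IsLocalACube Ω Q ∧ IsAtomOn Q a ∧ ∫ x, a x = 0

/-- A type (b_far) local atom (no mean value condition). -/
def IsLocalBFarAtom {n : ℕ} (Ω : Set (Euc n)) (a : Euc n → ℝ) : Prop :=
  ∃ Q : Cube n, IsLocalBFarCube Ω Q ∧ IsAtomOn Q a

/-- A type (b) local atom (no mean value condition). -/
def IsLocalBAtom {n : ℕ} (Ω : Set (Euc n)) (a : Euc n → ℝ) : Prop :=
  ∃ Q : Cube n, IsLocalBCube Ω Q ∧ IsAtomOn Q a

/-- An `h¹_CW(Ω)`-atom: as an `H¹_CW(Ω)`-atom, but the mean value condition is only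
required when `ℓ(Q) < 1`. -/
def Ish1CWAtom {n : ℕ} (Ω : Set (Euc n)) (a : Euc n → ℝ) : Prop :=
  ∃ Q : Cube n, Q.center ∈ Ω ∧ support a ⊆ Q.toSet ∩ closure Ω ∧
    MemLp a 2 volume ∧ eLpNorm a 2 volume ≤ (volume (Q.toSet ∩ Ω)) ^ (-(1 : ℝ) / 2) ∧
    (Q.side < 1 → ∫ x, a x = 0)

/-- The series `Σ c k • a k` converges to `f` in `L¹(Ω)`. -/
def L1SumOn {n : ℕ} (Ω : Set (Euc n)) (f : Euc n → ℝ) (c : ℕ → ℝ) (a : ℕ → Euc n → ℝ) : Prop :=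
  Tendsto (fun N => ∫⁻ x in Ω, (‖f x - ∑ k ∈ Finset.range N, c k * a k x‖₊ : ℝ≥0∞))
    atTop (𝓝 (0 : ℝ≥0∞))

/-- An atomic decomposition `f = Σ c k • a k` (in `L¹(Ω)`) where each `a k` is an atom in the
class described by the predicate `P` and `Σ |c k| < ∞`. -/
def AtomicDecomp {n : ℕ} (Ω : Set (Euc n)) (P : (Euc n → ℝ) → Prop)
    (f : Euc n → ℝ) (c : ℕ → ℝ) (a : ℕ → Euc n → ℝ) : Prop :=
  (∀ k, P (a k) ∨ c k = 0) ∧ Summable (fun k => |c k|) ∧ L1SumOn Ω f c a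

/-- Membership in the atomic space built from atoms satisfying `P`. -/
def MemAtomic {n : ℕ} (Ω : Set (Euc n)) (P : (Euc n → ℝ) → Prop) (f : Euc n → ℝ) : Prop :=
  ∃ c a, AtomicDecomp Ω P f c a

/-- The atomic norm: infimum of `Σ |c k|` over all atomic decompositions. -/
def atomicNorm {n : ℕ} (Ω : Set (Euc n)) (P : (Euc n → ℝ) → Prop) (f : Euc n → ℝ) : ℝ≥0∞ :=
  ⨅ (c : ℕ → ℝ) (a : ℕ → Euc n → ℝ) (_ : AtomicDecomp Ω P f c a),
    ENNReal.ofReal (∑' k, |c k|)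

/-- The convolution `φ_t ∗ f (x)` where `φ_t(x) = t⁻ⁿ φ(x/t)`. -/
def dilConv {n : ℕ} (φ f : Euc n → ℝ) (t : ℝ) (x : Euc n) : ℝ :=
  ∫ y, (t ^ n)⁻¹ * φ (t⁻¹ • (x - y)) * f y

/-- `‖f‖_{H¹(ℝⁿ)} = ‖sup_{t>0} |φ_t ∗ f|‖_{L¹}`. -/
def H1MaxNorm {n : ℕ} (φ f : Euc n → ℝ) : ℝ≥0∞ :=
  ∫⁻ x, ⨆ (t : ℝ) (_ : 0 < t), (‖dilConv φ f t x‖₊ : ℝ≥0∞)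

/-- `f ∈ H¹(ℝⁿ)` (with respect to the approximate identity generated by `φ`). -/
def MemH1 {n : ℕ} (φ f : Euc n → ℝ) : Prop :=
  LocallyIntegrable f volume ∧
  (∀ t : ℝ, 0 < t → ∀ x : Euc n,
    Integrable (fun y => (t ^ n)⁻¹ * φ (t⁻¹ • (x - y)) * f y) volume) ∧
  H1MaxNorm φ f < ⊤

/-- `f ∈ H¹_r(Ω)`: `f` is the restriction to `Ω` of a function in `H¹(ℝⁿ)`. -/
def MemH1r {n : ℕ} (φ : Euc n → ℝ) (Ω : Set (Euc n)) (f : Euc n → ℝ) : Prop :=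
  ∃ F, MemH1 φ F ∧ EqOn F f Ω

/-- `‖f‖_{H¹_r(Ω)}`: infimum of `‖F‖_{H¹(ℝⁿ)}` over extensions `F` of `f`. -/
def H1rNorm {n : ℕ} (φ : Euc n → ℝ) (Ω : Set (Euc n)) (f : Euc n → ℝ) : ℝ≥0∞ :=
  ⨅ (F : Euc n → ℝ) (_ : MemH1 φ F ∧ EqOn F f Ω), H1MaxNorm φ F

/-- `f ∈ H¹_z(Ω)`: the extension of `f` by zero outside `Ω` belongs to `H¹(ℝⁿ)`. -/
def MemH1z {n : ℕ} (φ : Euc n → ℝ) (Ω : Set (Euc n)) (f : Euc n → ℝ) : Prop :=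
  MemH1 φ (Ω.indicator f)

/-- `‖f‖_{H¹_z(Ω)}`: the `H¹(ℝⁿ)` norm of the extension of `f` by zero outside `Ω`. -/
def H1zNorm {n : ℕ} (φ : Euc n → ℝ) (Ω : Set (Euc n)) (f : Euc n → ℝ) : ℝ≥0∞ :=
  H1MaxNorm φ (Ω.indicator f)

/-- `‖f‖_{h¹(ℝⁿ)} = ‖sup_{0<t<1} |φ_t ∗ f|‖_{L¹}` (local Hardy space norm). -/
def h1MaxNorm {n : ℕ} (φ f : Euc n → ℝ) : ℝ≥0∞ :=
  ∫⁻ x, ⨆ (t : ℝ) (_ : 0 < t ∧ t < 1), (‖dilConv φ f t x‖₊ : ℝ≥0∞)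

/-- `f ∈ h¹(ℝⁿ)`. -/
def Memh1 {n : ℕ} (φ f : Euc n → ℝ) : Prop :=
  LocallyIntegrable f volume ∧
  (∀ t : ℝ, 0 < t → t < 1 → ∀ x : Euc n,
    Integrable (fun y => (t ^ n)⁻¹ * φ (t⁻¹ • (x - y)) * f y) volume) ∧
  h1MaxNorm φ f < ⊤

/-- `f ∈ h¹_r(Ω)`. -/
def Memh1r {n : ℕ} (φ : Euc n → ℝ) (Ω : Set (Euc n)) (f : Euc n → ℝ) : Prop :=
  ∃ F, Memh1 φ F ∧ EqOn F f Ω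

/-- `‖f‖_{h¹_r(Ω)}`. -/
def h1rNorm {n : ℕ} (φ : Euc n → ℝ) (Ω : Set (Euc n)) (f : Euc n → ℝ) : ℝ≥0∞ :=
  ⨅ (F : Euc n → ℝ) (_ : Memh1 φ F ∧ EqOn F f Ω), h1MaxNorm φ F

/-- `f ∈ h¹_z(Ω)`. -/
def Memh1z {n : ℕ} (φ : Euc n → ℝ) (Ω : Set (Euc n)) (f : Euc n → ℝ) : Prop :=
  Memh1 φ (Ω.indicator f)

/-- `‖f‖_{h¹_z(Ω)}`. -/
def h1zNorm {n : ℕ} (φ : Euc n → ℝ) (Ω : Set (Euc n)) (f : Euc n → ℝ) : ℝ≥0∞ :=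
  h1MaxNorm φ (Ω.indicator f)

/-- The square of the `BMO(ℝⁿ)` norm. -/
def BMONormSq {n : ℕ} (φ : Euc n → ℝ) : ℝ≥0∞ :=
  ⨆ Q : Cube n, oscSq Q.toSet φ

/-- `φ` is locally square-integrable on `Ω`. -/
def LocSqIntOn {n : ℕ} (Ω : Set (Euc n)) (φ : Euc n → ℝ) : Prop :=
  ∀ K : Set (Euc n), IsCompact K → K ⊆ Ω → MemLp φ 2 (volume.restrict K)

/-- `φ ∈ BMO(ℝⁿ)`. -/
def MemBMO {n : ℕ} (φ : Euc n → ℝ) : Prop :=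
  (∀ Q : Cube n, MemLp φ 2 (volume.restrict Q.toSet)) ∧ BMONormSq φ < ⊤

/-- `φ ∈ BMO_z(Ω)`: `φ ∈ BMO(ℝⁿ)` and `φ` is supported in `cl Ω`. -/
def MemBMOz {n : ℕ} (Ω : Set (Euc n)) (φ : Euc n → ℝ) : Prop :=
  MemBMO φ ∧ support φ ⊆ closure Ω

/-- The square of the `BMO_{z,a}(Ω)` norm. -/
def BMOzaNormSq {n : ℕ} (Ω : Set (Euc n)) (φ : Euc n → ℝ) : ℝ≥0∞ :=
  max (⨆ (Q : Cube n) (_ : IsTypeACube Ω Q), oscSq Q.toSet φ)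
      (⨆ (Q : Cube n) (_ : IsTypeBCube Ω Q), meanSq Q.toSet φ)

/-- The square of the `BMO_{r,a}(Ω)` norm. -/
def BMOraNormSq {n : ℕ} (Ω : Set (Euc n)) (φ : Euc n → ℝ) : ℝ≥0∞ :=
  ⨆ (Q : Cube n) (_ : IsTypeACube Ω Q), oscSq Q.toSet φ

/-- The square of the `BMO_CW(Ω)` norm. -/
def BMOcwNormSq {n : ℕ} (Ω : Set (Euc n)) (φ : Euc n → ℝ) : ℝ≥0∞ :=
  ⨆ (Q : Cube n) (_ : Q.center ∈ Ω), oscSq (Q.toSet ∩ Ω) φ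

/-- `φ ∈ BMO_r(Ω)`: `φ` is the restriction to `Ω` of a `BMO(ℝⁿ)` function. -/
def MemBMOr {n : ℕ} (Ω : Set (Euc n)) (φ : Euc n → ℝ) : Prop :=
  ∃ F, MemBMO F ∧ EqOn F φ Ω

/-- The square of the `BMO_r(Ω)` norm. -/
def BMOrNormSq {n : ℕ} (Ω : Set (Euc n)) (φ : Euc n → ℝ) : ℝ≥0∞ :=
  ⨅ (F : Euc n → ℝ) (_ : MemBMO F ∧ EqOn F φ Ω), BMONormSq F

/-- The subordinated (Poisson) kernel `p_t(x,y) = π^{-1/2} ∫₀^∞ K_{t²/4u}(x,y) e^{-u} u^{-1/2} du`. -/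
def subordKernel {n : ℕ} (K : ℝ → Euc n → Euc n → ℂ) (t : ℝ) (x y : Euc n) : ℂ :=
  ((Real.sqrt Real.pi)⁻¹ : ℝ) *
    ∫ u in Ioi (0 : ℝ), K (t ^ 2 / (4 * u)) x y * ((Real.exp (-u) * (Real.sqrt u)⁻¹ : ℝ) : ℂ)

lemma aux1 {a r : ℝ} (ha : 0 < a) (hr : 0 < r) :
    IntegrableOn (fun u : ℝ => u ^ (a - 1) * Real.exp (-(r * u))) (Ioi 0) := by
  have h := integrableOn_rpow_mul_exp_neg_mul_rpow (s := a - 1) (p := 1) (b := r)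
    (by linarith) one_pos hr
  refine h.congr_fun (fun u hu => ?_) measurableSet_Ioi
  beta_reduce
  rw [Real.rpow_one, neg_mul]

lemma aux2 {f : ℝ → ℂ} {a r A : ℝ} (ha : 0 < a) (hr : 0 < r)
    (hle : ∀ u ∈ Ioi (0:ℝ), ‖f u‖ ≤ A * (u ^ (a - 1) * Real.exp (-(r * u)))) :
    ‖∫ u in Ioi (0:ℝ), f u‖ ≤ A * ((1/r) ^ a * Real.Gamma a) := by
  have hg : IntegrableOn (fun u : ℝ => A * (u ^ (a - 1) * Real.exp (-(r * u)))) (Ioi 0) :=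
    (aux1 ha hr).const_mul A
  calc ‖∫ u in Ioi (0:ℝ), f u‖ ≤ ∫ u in Ioi (0:ℝ), ‖f u‖ := norm_integral_le_integral_norm f
    _ ≤ ∫ u in Ioi (0:ℝ), A * (u ^ (a - 1) * Real.exp (-(r * u))) := by
        refine integral_mono_of_nonneg (ae_of_all _ fun u => norm_nonneg _) hg ?_
        exact (ae_restrict_iff' measurableSet_Ioi).2 (ae_of_all _ hle)
    _ = A * ((1/r) ^ a * Real.Gamma a) := by
        rw [integral_const_mul, Real.integral_rpow_mul_exp_neg_mul_Ioi ha hr]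

lemma aux3 {f : ℝ → ℂ} {a r A : ℝ} (ha : 0 < a) (hr : 0 < r)
    (hm : AEStronglyMeasurable f (volume.restrict (Ioi 0)))
    (hle : ∀ u ∈ Ioi (0:ℝ), ‖f u‖ ≤ A * (u ^ (a - 1) * Real.exp (-(r * u)))) :
    IntegrableOn f (Ioi 0) := by
  refine Integrable.mono' ((aux1 ha hr).const_mul A) hm ?_
  exact (ae_restrict_iff' measurableSet_Ioi).2 (ae_of_all _ hle)

lemma rpow_kernel_eq {t u : ℝ} (ht : 0 < t) (hu : 0 < u) (n : ℕ) :
    (t^2/(4*u)) ^ (-(n:ℝ)/2) = 2^n * (t^n)⁻¹ * u ^ ((n:ℝ)/2) := by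
  have h1 : (t^2/(4*u)) ^ (-(n:ℝ)/2) = ((4*u)/t^2) ^ ((n:ℝ)/2) := by
    rw [neg_div, Real.rpow_neg (by positivity), ← Real.inv_rpow (by positivity), inv_div]
  rw [h1, Real.div_rpow (by positivity) (by positivity),
    Real.mul_rpow (by norm_num) hu.le]
  have h4 : (4:ℝ) ^ ((n:ℝ)/2) = 2^n := by
    rw [show (4:ℝ) = 2^(2:ℕ) by norm_num, ← Real.rpow_natCast (2:ℝ) 2,
      ← Real.rpow_mul (by norm_num), show ((2:ℕ):ℝ) * ((n:ℝ)/2) = (n:ℝ) by push_cast; ring,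
      Real.rpow_natCast]
  have ht2 : (t^2) ^ ((n:ℝ)/2) = t^n := by
    rw [← Real.rpow_natCast t 2, ← Real.rpow_mul ht.le,
      show ((2:ℕ):ℝ) * ((n:ℝ)/2) = (n:ℝ) by push_cast; ring, Real.rpow_natCast]
  rw [h4, ht2]; ring

lemma sqrt_kernel_eq {t u : ℝ} (ht : 0 < t) (hu : 0 < u) :
    Real.sqrt (t^2/(4*u)) = t / (2 * Real.sqrt u) := by
  rw [Real.sqrt_div (by positivity), Real.sqrt_sq ht.le,
    show (4:ℝ)*u = 2^2*u by norm_num, Real.sqrt_mul (by positivity), Real.sqrt_sq (by norm_num)]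

lemma sqrt_inv_eq {u : ℝ} (hu : 0 < u) : (Real.sqrt u)⁻¹ = u ^ (-(1:ℝ)/2) := by
  rw [Real.sqrt_eq_rpow, neg_div, Real.rpow_neg hu.le]

lemma ptbound_size {n : ℕ} {C₀ α t u d : ℝ} (ht : 0 < t) (hu : 0 < u) {z : ℂ}
    (hz : ‖z‖ ≤ C₀ * (t^2/(4*u)) ^ (-(n:ℝ)/2) * Real.exp (-α * d^2 / (t^2/(4*u)))) :
    ‖z * ((Real.exp (-u) * (Real.sqrt u)⁻¹ : ℝ) : ℂ)‖ ≤
      (C₀ * 2^n * (t^n)⁻¹) *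
        (u ^ (((n:ℝ)+1)/2 - 1) * Real.exp (-((1 + 4*α*d^2/t^2) * u))) := by
  have e1 : -α * d^2 / (t^2/(4*u)) = -((4*α*d^2/t^2) * u) := by field_simp
  have h3 : u ^ ((n:ℝ)/2) * u ^ (-(1:ℝ)/2) = u ^ (((n:ℝ)+1)/2 - 1) := by
    rw [← Real.rpow_add hu]; ring_nf
  have h4 : Real.exp (-((4*α*d^2/t^2)*u)) * Real.exp (-u)
      = Real.exp (-((1 + 4*α*d^2/t^2) * u)) := by
    rw [← Real.exp_add]; ring_nf
  calc ‖z * ((Real.exp (-u) * (Real.sqrt u)⁻¹ : ℝ) : ℂ)‖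
      = ‖z‖ * (Real.exp (-u) * (Real.sqrt u)⁻¹) := by
        rw [norm_mul, Complex.norm_real, Real.norm_eq_abs, abs_of_nonneg (by positivity)]
    _ ≤ (C₀ * (t^2/(4*u)) ^ (-(n:ℝ)/2) * Real.exp (-α * d^2 / (t^2/(4*u)))) *
          (Real.exp (-u) * (Real.sqrt u)⁻¹) :=
        mul_le_mul_of_nonneg_right hz (by positivity)
    _ = _ := by rw [rpow_kernel_eq ht hu, e1, sqrt_inv_eq hu, ← h3, ← h4]; ring

lemma ptbound_holder {n : ℕ} {C₀ μ t u δ : ℝ} (ht : 0 < t)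
    (hu : 0 < u) (hδ : 0 ≤ δ) {z : ℂ}
    (hz : ‖z‖ ≤ C₀ * (t^2/(4*u)) ^ (-(n:ℝ)/2) * (δ / Real.sqrt (t^2/(4*u))) ^ μ) :
    ‖z * ((Real.exp (-u) * (Real.sqrt u)⁻¹ : ℝ) : ℂ)‖ ≤
      (C₀ * 2^n * (t^n)⁻¹ * (2^μ * (δ/t)^μ)) *
        (u ^ (((n:ℝ)+1+μ)/2 - 1) * Real.exp (-((1:ℝ) * u))) := by
  have hsu : 0 < Real.sqrt u := Real.sqrt_pos.2 hu
  have e1 : δ / Real.sqrt (t^2/(4*u)) = (2 * Real.sqrt u) * (δ/t) := by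
    rw [sqrt_kernel_eq ht hu]; field_simp
  have e2 : ((2 * Real.sqrt u) * (δ/t)) ^ μ
      = 2^μ * u ^ ((1:ℝ)/2 * μ) * (δ/t)^μ := by
    rw [Real.mul_rpow (by positivity) (by positivity),
      Real.mul_rpow (by norm_num) hsu.le, Real.sqrt_eq_rpow,
      ← Real.rpow_mul hu.le]
  have h3 : u ^ ((n:ℝ)/2) * u ^ ((1:ℝ)/2 * μ) * u ^ (-(1:ℝ)/2)
      = u ^ (((n:ℝ)+1+μ)/2 - 1) := by
    rw [← Real.rpow_add hu, ← Real.rpow_add hu]; ring_nf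
  calc ‖z * ((Real.exp (-u) * (Real.sqrt u)⁻¹ : ℝ) : ℂ)‖
      = ‖z‖ * (Real.exp (-u) * (Real.sqrt u)⁻¹) := by
        rw [norm_mul, Complex.norm_real, Real.norm_eq_abs, abs_of_nonneg (by positivity)]
    _ ≤ (C₀ * (t^2/(4*u)) ^ (-(n:ℝ)/2) * (δ / Real.sqrt (t^2/(4*u))) ^ μ) *
          (Real.exp (-u) * (Real.sqrt u)⁻¹) :=
        mul_le_mul_of_nonneg_right hz (by positivity)
    _ = _ := by rw [rpow_kernel_eq ht hu, e1, e2, sqrt_inv_eq hu, ← h3, one_mul]; ring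

lemma final_algebra {n : ℕ} {α t d : ℝ} (hα : 0 < α) (ht : 0 < t) (hd : 0 ≤ d) :
    (1 / (1 + 4*α*d^2/t^2)) ^ (((n:ℝ)+1)/2) ≤
      (2 * max 1 (4*α)⁻¹) ^ (((n:ℝ)+1)/2) * (t^(n+1) / (t+d)^(n+1)) := by
  set M : ℝ := 2 * max 1 (4*α)⁻¹ with hMdef
  have hM2 : 2 ≤ M := by
    have := le_max_left (1:ℝ) (4*α)⁻¹; nlinarith
  have hMα : 2 ≤ 4*α*M := by
    have h := le_max_right (1:ℝ) (4*α)⁻¹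
    have : 4*α*(2*(4*α)⁻¹) = 2 := by field_simp
    nlinarith
  have htd : 0 < t + d := by linarith
  have hA : 1 / (1 + 4*α*d^2/t^2) ≤ M * (t/(t+d))^2 := by
    have h1 : 1 + 4*α*d^2/t^2 = (t^2+4*α*d^2)/t^2 := by field_simp
    rw [h1, one_div, inv_div, div_pow, ← mul_div_assoc,
      div_le_div_iff₀ (by positivity) (by positivity)]
    have key : (t+d)^2 ≤ M*(t^2+4*α*d^2) := by
      nlinarith [sq_nonneg (t-d), sq_nonneg d,
        mul_le_mul_of_nonneg_right hM2 (sq_nonneg t),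
        mul_le_mul_of_nonneg_right hMα (sq_nonneg d)]
    nlinarith [mul_le_mul_of_nonneg_left key (sq_nonneg t)]
  calc (1 / (1 + 4*α*d^2/t^2)) ^ (((n:ℝ)+1)/2)
      ≤ (M * (t/(t+d))^2) ^ (((n:ℝ)+1)/2) :=
        Real.rpow_le_rpow (by positivity) hA (by positivity)
    _ = M ^ (((n:ℝ)+1)/2) * (t^(n+1) / (t+d)^(n+1)) := by
        rw [Real.mul_rpow (by positivity) (by positivity)]
        congr 1
        rw [← Real.rpow_natCast (t/(t+d)) 2, ← Real.rpow_mul (by positivity),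
          show ((2:ℕ):ℝ) * (((n:ℝ)+1)/2) = ((n+1:ℕ):ℝ) by push_cast; ring,
          Real.rpow_natCast, div_pow]

/-- Gaussian and Hölder bounds on a kernel `K_t` yield Poisson-type decay
and Hölder bounds for the subordinated kernel `p_t`. -/
theorem stmt_10 {n : ℕ} (hn : 1 ≤ n) (Ω : Set (Euc n)) (K : ℝ → Euc n → Euc n → ℂ)
    (hK : Measurable fun p : ℝ × Euc n × Euc n => K p.1 p.2.1 p.2.2)
    (C₀ α μ : ℝ) (hC₀ : 0 < C₀) (hα : 0 < α) (hμ : 0 < μ) (hμ1 : μ ≤ 1)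
    (hbound : ∀ t : ℝ, 0 < t → ∀ x ∈ Ω, ∀ y ∈ Ω,
      ‖K t x y‖ ≤ C₀ * t ^ (-(n : ℝ) / 2) * Real.exp (-α * ‖x - y‖ ^ 2 / t))
    (hholder : ∀ t : ℝ, 0 < t → ∀ x ∈ Ω, ∀ y ∈ Ω, ∀ y' ∈ Ω,
      ‖K t x y - K t x y'‖ ≤ C₀ * t ^ (-(n : ℝ) / 2) * (‖y - y'‖ / Real.sqrt t) ^ μ) :
    ∃ C : ℝ, 0 < C ∧ ∃ ν : ℝ, 0 < ν ∧ ν < 1 ∧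
      ∀ t : ℝ, 0 < t → ∀ x ∈ Ω, ∀ y ∈ Ω, ∀ y' ∈ Ω,
        ‖subordKernel K t x y‖ ≤ C * t / (t + ‖x - y‖) ^ (n + 1) ∧
        ‖subordKernel K t x y - subordKernel K t x y'‖ ≤
          C * t ^ (-(n : ℝ)) * (‖y - y'‖ / t) ^ ν := by
  have hπ : 0 < Real.sqrt Real.pi := Real.sqrt_pos.2 Real.pi_pos
  set p : ℝ := (Real.sqrt Real.pi)⁻¹ with hpdef
  have hp0 : 0 < p := by positivity
  have hΓ₁ : 0 < Real.Gamma (((n:ℝ)+1)/2) := Real.Gamma_pos_of_pos (by positivity)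
  have hΓ₂ : 0 < Real.Gamma (((n:ℝ)+1+μ)/2) := Real.Gamma_pos_of_pos (by positivity)
  set M : ℝ := 2 * max 1 (4*α)⁻¹ with hM
  have hMpos : 0 < M := by positivity
  set C₁ : ℝ := p * (C₀ * 2^n) * Real.Gamma (((n:ℝ)+1)/2) * M ^ (((n:ℝ)+1)/2) with hC₁
  set C₂ : ℝ := p * (C₀ * 2^n) * Real.Gamma (((n:ℝ)+1)/2) with hC₂
  set C₃ : ℝ := p * (C₀ * 2^n) * (2:ℝ)^μ * Real.Gamma (((n:ℝ)+1+μ)/2) with hC₃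
  have hC₁0 : 0 < C₁ := by rw [hC₁]; positivity
  have hC₂0 : 0 < C₂ := by rw [hC₂]; positivity
  have hC₃0 : 0 < C₃ := by rw [hC₃]; positivity
  set C : ℝ := max C₁ (max (2*C₂) C₃) with hC
  have hCC₁ : C₁ ≤ C := le_max_left _ _
  have hCC₂ : 2*C₂ ≤ C := le_trans (le_max_left _ _) (le_max_right _ _)
  have hCC₃ : C₃ ≤ C := le_trans (le_max_right _ _) (le_max_right _ _)
  have hC0 : 0 < C := lt_of_lt_of_le hC₁0 hCC₁
  refine ⟨C, hC0, μ/2, by positivity, by linarith, ?_⟩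
  intro t ht x hx y hy y' hy'
  have htn : t ^ (-(n:ℝ)) = (t^n)⁻¹ := by
    rw [Real.rpow_neg ht.le, Real.rpow_natCast]
  have hmeas : ∀ z : Euc n, AEStronglyMeasurable
      (fun u : ℝ => K (t ^ 2 / (4 * u)) x z * ((Real.exp (-u) * (Real.sqrt u)⁻¹ : ℝ) : ℂ))
      (volume.restrict (Ioi 0)) := by
    intro z
    apply Measurable.aestronglyMeasurable
    exact (hK.comp (((measurable_const.div (measurable_const.mul measurable_id))).prodMk
        (measurable_const.prodMk measurable_const))).mul
      (Complex.measurable_ofReal.comp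
        ((Real.measurable_exp.comp measurable_neg).mul Real.continuous_sqrt.measurable.inv))
  have hsizebd : ∀ z ∈ Ω, ∀ u ∈ Ioi (0:ℝ),
      ‖K (t ^ 2 / (4 * u)) x z * ((Real.exp (-u) * (Real.sqrt u)⁻¹ : ℝ) : ℂ)‖ ≤
        (C₀ * 2^n * (t^n)⁻¹) * (u ^ (((n:ℝ)+1)/2 - 1) *
          Real.exp (-((1 + 4*α*‖x - z‖^2/t^2) * u))) := by
    intro z hz u hu
    have hu0 : 0 < u := hu
    exact ptbound_size ht hu0 (hbound _ (by positivity) x hx z hz)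
  have hkey1 : ∀ z ∈ Ω, ‖∫ u in Ioi (0:ℝ),
        K (t ^ 2 / (4 * u)) x z * ((Real.exp (-u) * (Real.sqrt u)⁻¹ : ℝ) : ℂ)‖ ≤
      (C₀ * 2^n * (t^n)⁻¹) * ((1/(1 + 4*α*‖x - z‖^2/t^2)) ^ (((n:ℝ)+1)/2) *
        Real.Gamma (((n:ℝ)+1)/2)) :=
    fun z hz => aux2 (by positivity) (by positivity) (hsizebd z hz)
  have hsub : ∀ z : Euc n, ‖subordKernel K t x z‖ =
      p * ‖∫ u in Ioi (0:ℝ),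
        K (t ^ 2 / (4 * u)) x z * ((Real.exp (-u) * (Real.sqrt u)⁻¹ : ℝ) : ℂ)‖ := by
    intro z
    rw [subordKernel, norm_mul, Complex.norm_real, Real.norm_eq_abs, abs_of_nonneg hp0.le]
  have htriv : ∀ z ∈ Ω, ‖subordKernel K t x z‖ ≤ C₂ * (t^n)⁻¹ := by
    intro z hz
    rw [hsub z]
    refine le_trans (mul_le_mul_of_nonneg_left (hkey1 z hz) hp0.le) ?_
    have h1 : (1/(1 + 4*α*‖x - z‖^2/t^2)) ^ (((n:ℝ)+1)/2) ≤ 1 := by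
      apply Real.rpow_le_one (by positivity) ?_ (by positivity)
      rw [div_le_one (by positivity)]
      have h0 : (0:ℝ) ≤ 4*α*‖x - z‖^2/t^2 := by positivity
      linarith
    calc p * ((C₀ * 2^n * (t^n)⁻¹) * ((1/(1 + 4*α*‖x - z‖^2/t^2)) ^ (((n:ℝ)+1)/2) *
          Real.Gamma (((n:ℝ)+1)/2)))
        ≤ p * ((C₀ * 2^n * (t^n)⁻¹) * (1 * Real.Gamma (((n:ℝ)+1)/2))) := by gcongr
      _ = C₂ * (t^n)⁻¹ := by rw [hC₂]; ring
  constructor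
  · -- size bound
    have hd : (0:ℝ) ≤ ‖x - y‖ := norm_nonneg _
    have htd : 0 < t + ‖x - y‖ := by linarith
    have step : ‖subordKernel K t x y‖ ≤ C₁ * t / (t + ‖x - y‖)^(n+1) := by
      rw [hsub y]
      refine le_trans (mul_le_mul_of_nonneg_left (hkey1 y hy) hp0.le) ?_
      calc p * ((C₀ * 2^n * (t^n)⁻¹) * ((1/(1 + 4*α*‖x - y‖^2/t^2)) ^ (((n:ℝ)+1)/2) *
            Real.Gamma (((n:ℝ)+1)/2)))
          ≤ p * ((C₀ * 2^n * (t^n)⁻¹) *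
              ((M ^ (((n:ℝ)+1)/2) * (t^(n+1) / (t + ‖x - y‖)^(n+1))) *
                Real.Gamma (((n:ℝ)+1)/2))) := by
            gcongr
            exact final_algebra hα ht hd
        _ = C₁ * t / (t + ‖x - y‖)^(n+1) := by
            rw [hC₁]
            field_simp
            ring
    refine step.trans ?_
    gcongr
  · -- Hölder bound
    have hδ0 : (0:ℝ) ≤ ‖y - y'‖ := norm_nonneg _
    by_cases hc : ‖y - y'‖ ≤ t
    · have hint : ∀ z ∈ Ω, IntegrableOn
          (fun u : ℝ => K (t ^ 2 / (4 * u)) x z * ((Real.exp (-u) * (Real.sqrt u)⁻¹ : ℝ) : ℂ))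
          (Ioi 0) :=
        fun z hz => aux3 (by positivity : (0:ℝ) < ((n:ℝ)+1)/2)
          (by positivity : (0:ℝ) < 1 + 4*α*‖x - z‖^2/t^2) (hmeas z) (hsizebd z hz)
      have hkey2 : ‖∫ u in Ioi (0:ℝ),
            (K (t ^ 2 / (4 * u)) x y * ((Real.exp (-u) * (Real.sqrt u)⁻¹ : ℝ) : ℂ) -
             K (t ^ 2 / (4 * u)) x y' * ((Real.exp (-u) * (Real.sqrt u)⁻¹ : ℝ) : ℂ))‖ ≤
          (C₀ * 2^n * (t^n)⁻¹ * (2^μ * (‖y - y'‖/t)^μ)) *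
            ((1/1) ^ (((n:ℝ)+1+μ)/2) * Real.Gamma (((n:ℝ)+1+μ)/2)) := by
        refine aux2 (by positivity) one_pos ?_
        intro u hu
        have hu0 : 0 < u := hu
        rw [← sub_mul]
        exact ptbound_holder ht hu0 hδ0 (hholder _ (by positivity) x hx y hy y' hy')
      have heq : ‖subordKernel K t x y - subordKernel K t x y'‖ =
          p * ‖∫ u in Ioi (0:ℝ),
            (K (t ^ 2 / (4 * u)) x y * ((Real.exp (-u) * (Real.sqrt u)⁻¹ : ℝ) : ℂ) -
             K (t ^ 2 / (4 * u)) x y' * ((Real.exp (-u) * (Real.sqrt u)⁻¹ : ℝ) : ℂ))‖ := by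
        rw [subordKernel, subordKernel, ← mul_sub, ← integral_sub (hint y hy) (hint y' hy'),
          norm_mul, Complex.norm_real, Real.norm_eq_abs, abs_of_nonneg hp0.le]
      have hstep : (‖y - y'‖/t) ^ μ ≤ (‖y - y'‖/t) ^ (μ/2) := by
        rcases eq_or_lt_of_le hδ0 with h0 | h0
        · rw [← h0, zero_div, Real.zero_rpow hμ.ne', Real.zero_rpow (by positivity)]
        · exact Real.rpow_le_rpow_of_exponent_ge (by positivity)
            ((div_le_one ht).2 hc) (by linarith)
      calc ‖subordKernel K t x y - subordKernel K t x y'‖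
          ≤ p * ((C₀ * 2^n * (t^n)⁻¹ * (2^μ * (‖y - y'‖/t)^μ)) *
              ((1/1) ^ (((n:ℝ)+1+μ)/2) * Real.Gamma (((n:ℝ)+1+μ)/2))) := by
            rw [heq]; exact mul_le_mul_of_nonneg_left hkey2 hp0.le
        _ = C₃ * (t^n)⁻¹ * (‖y - y'‖/t)^μ := by
            rw [hC₃, one_div_one, Real.one_rpow]; ring
        _ ≤ C₃ * (t^n)⁻¹ * (‖y - y'‖/t)^(μ/2) := by gcongr
        _ ≤ C * t ^ (-(n:ℝ)) * (‖y - y'‖/t)^(μ/2) := by rw [htn]; gcongr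
    · push_neg at hc
      have h1 : (1:ℝ) ≤ (‖y - y'‖/t)^(μ/2) :=
        Real.one_le_rpow ((one_le_div ht).2 hc.le) (by positivity)
      calc ‖subordKernel K t x y - subordKernel K t x y'‖
          ≤ ‖subordKernel K t x y‖ + ‖subordKernel K t x y'‖ := norm_sub_le _ _
        _ ≤ C₂ * (t^n)⁻¹ + C₂ * (t^n)⁻¹ := add_le_add (htriv y hy) (htriv y' hy')
        _ = (2*C₂) * (t^n)⁻¹ * 1 := by ring
        _ ≤ (2*C₂) * (t^n)⁻¹ * (‖y - y'‖/t)^(μ/2) := by gcongr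
        _ ≤ C * t ^ (-(n:ℝ)) * (‖y - y'‖/t)^(μ/2) := by rw [htn]; gcongr

end
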